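/- Let L: ℝⁿ → [0,∞) be a continuously differentiable solution of the stationary HJB equation f·∇L + ½|gᵀ∇L|² = 0 with L(0) = 0, and let L be continuous at 0. Let u: (−∞,0] → ℝᵐ be continuous with ∫_{−∞}^0 |u(s)|² ds < ∞, and let x: (−∞,0] → ℝⁿ be differentiable with x′(s) = f(x(s)) + g(x(s))u(s) for all s, lim_{t→−∞} x(t) = 0, and x(0) = y. Then L(y) ≤ ½∫_{−∞}^0 |u(s)|² ds; i.e., L is a lower bound for the control energy needed to steer the system from 0 to y. -/

import Mathlib

open Matrix MeasureTheory Filter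

/-- The continuous linear map `v ↦ a ⬝ᵥ v`, representing the differential of a scalar
function with gradient vector `a`. -/
noncomputable def dotCLM {n : ℕ} (a : Fin n → ℝ) : (Fin n → ℝ) →L[ℝ] ℝ :=
  LinearMap.toContinuousLinearMap
    { toFun := fun v => a ⬝ᵥ v
      map_add' := by intro v w; simp [dotProduct_add]
      map_smul' := by intro c v; simp [dotProduct_smul] }

/-- A nonnegative `C¹` solution `L` of the stationary HJB equation
`f·∇L + ½|gᵀ∇L|² = 0`, `L(0) = 0`, is a lower bound for the control energy
needed to steer the system `ẋ = f(x) + g(x)u` from `0` (at time `-∞`) to `y` (at time `0`):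
`L(y) ≤ ½∫_{-∞}^0 |u(s)|² ds`. -/
theorem controllability_function_lower_bound
    (n m : ℕ)
    (f : (Fin n → ℝ) → (Fin n → ℝ)) (g : (Fin n → ℝ) → Matrix (Fin n) (Fin m) ℝ)
    (L : (Fin n → ℝ) → ℝ) (gradL : (Fin n → ℝ) → (Fin n → ℝ))
    (hLnonneg : ∀ x, 0 ≤ L x)
    -- `L` is continuously differentiable with gradient `gradL`:
    (hLdiff : ∀ x, HasFDerivAt L (dotCLM (gradL x)) x)
    (hLC1 : Continuous gradL)
    -- `L` solves the stationary HJB equation with `L(0) = 0`: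
    (hHJB : ∀ x, f x ⬝ᵥ gradL x
      + (1/2) * (((g x)ᵀ *ᵥ gradL x) ⬝ᵥ ((g x)ᵀ *ᵥ gradL x)) = 0)
    (hL0 : L 0 = 0)
    (hLcont : ContinuousAt L 0)
    -- a continuous, square-integrable control on `(-∞,0]`:
    (u : ℝ → Fin m → ℝ) (hu : ContinuousOn u (Set.Iic (0 : ℝ)))
    (huL2 : IntegrableOn (fun s => u s ⬝ᵥ u s) (Set.Iic (0 : ℝ)))
    -- a corresponding trajectory steering `0` (at time `-∞`) to `y` (at time `0`):
    (x : ℝ → Fin n → ℝ) (y : Fin n → ℝ)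
    (hx : ∀ s ∈ Set.Iic (0 : ℝ), HasDerivAt x (f (x s) + (g (x s)) *ᵥ u s) s)
    (hx0 : Tendsto x atBot (nhds 0))
    (hxy : x 0 = y) :
    L y ≤ (1/2) * ∫ s in Set.Iic (0 : ℝ), u s ⬝ᵥ u s := by
  set C := (1/2 : ℝ) * ∫ s in Set.Iic (0 : ℝ), u s ⬝ᵥ u s with hC
  have hqnonneg : ∀ s : ℝ, 0 ≤ u s ⬝ᵥ u s := fun s =>
    Finset.sum_nonneg fun i _ => mul_self_nonneg _
  -- continuity of the energy density on `Iic 0`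
  have hq : ContinuousOn (fun s => u s ⬝ᵥ u s) (Set.Iic (0 : ℝ)) := by
    simp only [dotProduct]
    apply continuousOn_finset_sum
    intro i _
    exact ((continuous_apply i).comp_continuousOn hu).mul
      ((continuous_apply i).comp_continuousOn hu)
  -- derivative of `s ↦ L (x s)` on `Iic 0`
  have hφ : ∀ s ∈ Set.Iic (0 : ℝ),
      HasDerivAt (fun s => L (x s)) (gradL (x s) ⬝ᵥ (f (x s) + g (x s) *ᵥ u s)) s := by
    intro s hs
    exact (hLdiff (x s)).comp_hasDerivAt s (hx s hs)
  -- the pointwise bound on the derivative, from HJB and Cauchy–Schwarz/Young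
  have hbound : ∀ s : ℝ,
      gradL (x s) ⬝ᵥ (f (x s) + g (x s) *ᵥ u s) ≤ (1/2) * (u s ⬝ᵥ u s) := by
    intro s
    set a := (g (x s))ᵀ *ᵥ gradL (x s) with ha
    have h1 : gradL (x s) ⬝ᵥ (g (x s) *ᵥ u s) = a ⬝ᵥ u s := by
      rw [Matrix.dotProduct_mulVec, ha, Matrix.mulVec_transpose]
    have h2 : gradL (x s) ⬝ᵥ f (x s) = -((1/2) * (a ⬝ᵥ a)) := by
      have := hHJB (x s)
      rw [dotProduct_comm]
      linarith
    have h3 : 0 ≤ (a - u s) ⬝ᵥ (a - u s) :=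
      Finset.sum_nonneg fun i _ => mul_self_nonneg _
    have h4 : (a - u s) ⬝ᵥ (a - u s)
        = a ⬝ᵥ a - a ⬝ᵥ u s - a ⬝ᵥ u s + u s ⬝ᵥ u s := by
      simp [sub_dotProduct, dotProduct_sub]
      rw [dotProduct_comm (u s) a]
      ring
    rw [dotProduct_add, h1, h2]
    nlinarith [h3, h4]
  -- key step: for every `t ≤ 0`, `L y ≤ L (x t) + C`
  have key : ∀ t ≤ (0 : ℝ), L y ≤ L (x t) + C := by
    intro t ht
    have huInt : IntervalIntegrable (fun s => u s ⬝ᵥ u s) volume t 0 := by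
      rw [intervalIntegrable_iff_integrableOn_Ioc_of_le ht]
      exact huL2.mono_set Set.Ioc_subset_Iic_self
    set B : ℝ → ℝ := fun s => ∫ r in t..s, u r ⬝ᵥ u r with hB
    set h : ℝ → ℝ := fun s => (1/2) * B s - L (x s) with hh
    have hIcc : Set.uIcc t 0 = Set.Icc t 0 := Set.uIcc_of_le ht
    -- `h` is continuous on `[t,0]`
    have hhcont : ContinuousOn h (Set.Icc t 0) := by
      have hBcont : ContinuousOn B (Set.Icc t 0) := by
        rw [← hIcc]
        exact intervalIntegral.continuousOn_primitive_interval' huInt Set.left_mem_uIcc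
      have hLxcont : ContinuousOn (fun s => L (x s)) (Set.Icc t 0) := by
        intro s hs
        exact ((hφ s (Set.Icc_subset_Iic_self hs)).continuousAt).continuousWithinAt
      exact (continuousOn_const.mul hBcont).sub hLxcont
    -- `h` has nonnegative derivative on the interior
    have hderiv : ∀ s ∈ Set.Ioo t 0,
        HasDerivAt h ((1/2) * (u s ⬝ᵥ u s)
          - gradL (x s) ⬝ᵥ (f (x s) + g (x s) *ᵥ u s)) s := by
      intro s hs
      have hs0 : s < 0 := hs.2
      have hmem : Set.Iic (0 : ℝ) ∈ nhds s := Iic_mem_nhds hs0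
      have hIs : IntervalIntegrable (fun r => u r ⬝ᵥ u r) volume t s := by
        rw [intervalIntegrable_iff_integrableOn_Ioc_of_le hs.1.le]
        exact huL2.mono_set (Set.Ioc_subset_Iic_self.trans (Set.Iic_subset_Iic.2 hs0.le))
      have hqs : ContinuousAt (fun r => u r ⬝ᵥ u r) s := hq.continuousAt hmem
      have hBs : HasDerivAt B (u s ⬝ᵥ u s) s :=
        intervalIntegral.integral_hasDerivAt_right hIs
          (ContinuousOn.stronglyMeasurableAtFilter isOpen_Iio
            (hq.mono Set.Iio_subset_Iic_self) s hs0) hqs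
      exact (hBs.const_mul (1/2)).sub (hφ s hs0.le)
    have hmono : MonotoneOn h (Set.Icc t 0) := by
      apply monotoneOn_of_deriv_nonneg (convex_Icc t 0) hhcont
      · intro s hs
        rw [interior_Icc] at hs
        exact ((hderiv s hs).differentiableAt).differentiableWithinAt
      · intro s hs
        rw [interior_Icc] at hs
        rw [(hderiv s hs).deriv]
        have := hbound s
        linarith
    have ht0 : h t ≤ h 0 := by
      apply hmono (Set.left_mem_Icc.2 ht) (Set.right_mem_Icc.2 ht) ht
    have hBt : B t = 0 := intervalIntegral.integral_same
    have hB0 : (1/2) * B 0 ≤ C := by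
      rw [hC]
      simp only [hB]
      have : (∫ r in t..(0:ℝ), u r ⬝ᵥ u r) = ∫ r in Set.Ioc t 0, u r ⬝ᵥ u r :=
        intervalIntegral.integral_of_le ht
      rw [this]
      have hle : (∫ r in Set.Ioc t 0, u r ⬝ᵥ u r) ≤ ∫ r in Set.Iic (0:ℝ), u r ⬝ᵥ u r := by
        apply setIntegral_mono_set huL2
        · exact Filter.Eventually.of_forall hqnonneg
        · exact Set.Ioc_subset_Iic_self.eventuallyLE
      linarith
    have := ht0
    simp only [hh, hBt, hxy, mul_zero, zero_sub, neg_le_sub_iff_le_add] at this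
    -- `-L (x t) ≤ 1/2 * B 0 - L y`
    linarith
  -- limit as `t → -∞`
  have hlim : Tendsto (fun t => L (x t) + C) atBot (nhds (0 + C)) := by
    have : Tendsto (fun t => L (x t)) atBot (nhds (L 0)) := hLcont.tendsto.comp hx0
    rw [hL0] at this
    exact this.add tendsto_const_nhds
  have : L y ≤ 0 + C :=
    ge_of_tendsto hlim (eventually_atBot.2 ⟨0, fun t ht => key t ht⟩)
  linarith
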